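/- arXiv:1702.08547 — 2 statements merged into one kernel-verified Lean document; each statement's English description precedes it below -/
import Mathlib

section
/- For every k ≥ 1, the k-th prime satisfies p_k < k² + 2, and for k ≥ 2, p_k < k²; in particular p_{n+1} < (n+1)² for all n ≥ 1. -/
open Finset Real

private lemma lemA : ∀ n : ℕ, 8 ≤ n → (n + 1) ^ 2 * 9 ^ n ≤ 16 ^ n := by
  intro n hn
  induction n with
  | zero => omega
  | succ m ih =>
    rcases Nat.lt_or_ge m 8 with h | h
    · interval_cases m <;> first | omega | norm_num
    · have hm := ih h
      have key : (m + 2) ^ 2 * 9 ≤ (m + 1) ^ 2 * 16 := by nlinarith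
      calc (m + 2) ^ 2 * 9 ^ (m + 1) = ((m + 2) ^ 2 * 9) * 9 ^ m := by ring
        _ ≤ ((m + 1) ^ 2 * 16) * 9 ^ m := Nat.mul_le_mul_right _ key
        _ = 16 * ((m + 1) ^ 2 * 9 ^ m) := by ring
        _ ≤ 16 * 16 ^ m := Nat.mul_le_mul_left _ hm
        _ = 16 ^ (m + 1) := by ring

private lemma lemKey (k : ℕ) (hk : 8 ≤ k) : (k + 1) ^ (2 * k + 3) ≤ (2 * k) ^ (2 * k + 1) := by
  have h16 : 0 < 16 ^ (2 * k + 1) := Nat.pow_pos (by norm_num)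
  refine Nat.le_of_mul_le_mul_right ?_ h16
  have h1 : 16 * (k + 1) ≤ 18 * k := by omega
  have hA : (2 * k + 1 + 1) ^ 2 * 9 ^ (2 * k + 1) ≤ 16 ^ (2 * k + 1) :=
    lemA (2 * k + 1) (by omega)
  calc (k + 1) ^ (2 * k + 3) * 16 ^ (2 * k + 1)
      = (k + 1) ^ 2 * (16 * (k + 1)) ^ (2 * k + 1) := by
        rw [Nat.mul_pow]; ring
    _ ≤ (k + 1) ^ 2 * (18 * k) ^ (2 * k + 1) :=
        Nat.mul_le_mul_left _ (Nat.pow_le_pow_left h1 _)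
    _ = (k + 1) ^ 2 * 9 ^ (2 * k + 1) * (2 * k) ^ (2 * k + 1) := by
        rw [show (18 : ℕ) * k = 9 * (2 * k) by ring, Nat.mul_pow]; ring
    _ ≤ (2 * k + 1 + 1) ^ 2 * 9 ^ (2 * k + 1) * (2 * k) ^ (2 * k + 1) :=
        Nat.mul_le_mul_right _ (Nat.mul_le_mul_right _ (Nat.pow_le_pow_left (by omega) _))
    _ ≤ 16 ^ (2 * k + 1) * (2 * k) ^ (2 * k + 1) := Nat.mul_le_mul_right _ hA
    _ = (2 * k) ^ (2 * k + 1) * 16 ^ (2 * k + 1) := by ring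

private lemma lemT : ∀ k : ℕ, 8 ≤ k → k ^ (2 * k + 1) ≤ 2 ^ (k * k - 2) := by
  intro k hk
  induction k with
  | zero => omega
  | succ m ih =>
    rcases Nat.lt_or_ge m 8 with h | h
    · have hm : m = 7 := by omega
      subst hm
      norm_num
    · have hm := ih h
      have hkey := lemKey m h
      have hmm : (m + 1) * (m + 1) = m * m + (2 * m + 1) := by ring
      have hmm2 : 64 ≤ m * m := Nat.mul_le_mul h h
      have hexp : (m + 1) * (m + 1) - 2 = (m * m - 2) + (2 * m + 1) := by omega
      calc (m + 1) ^ (2 * (m + 1) + 1) = (m + 1) ^ (2 * m + 3) := by ring_nf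
        _ ≤ (2 * m) ^ (2 * m + 1) := hkey
        _ = 2 ^ (2 * m + 1) * m ^ (2 * m + 1) := by rw [Nat.mul_pow]
        _ ≤ 2 ^ (2 * m + 1) * 2 ^ (m * m - 2) := Nat.mul_le_mul_left _ hm
        _ = 2 ^ ((m * m - 2) + (2 * m + 1)) := by rw [← pow_add]; ring_nf
        _ = 2 ^ ((m + 1) * (m + 1) - 2) := by rw [hexp]

private lemma binom_le (n : ℕ) (hn : 0 < n) :
    Nat.centralBinom n ≤ (2 * n) ^ Nat.count Nat.Prime (2 * n + 1) := by
  classical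
  have h2n : 0 < 2 * n := by omega
  set S := (Finset.range (2 * n + 1)).filter Nat.Prime with hS
  have hprod : (∏ p ∈ S, p ^ (Nat.centralBinom n).factorization p)
      = ∏ p ∈ Finset.range (2 * n + 1), p ^ (Nat.centralBinom n).factorization p := by
    refine Finset.prod_filter_of_ne fun p _ hne => ?_
    by_contra hp
    exact hne (by rw [Nat.factorization_eq_zero_of_not_prime _ hp, pow_zero])
  have hcard : S.card = Nat.count Nat.Prime (2 * n + 1) := by
    rw [Nat.count_eq_card_filter_range]
  calc Nat.centralBinom n
      = ∏ p ∈ Finset.range (2 * n + 1), p ^ (Nat.centralBinom n).factorization p :=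
        (Nat.prod_pow_factorization_centralBinom n).symm
    _ = ∏ p ∈ S, p ^ (Nat.centralBinom n).factorization p := hprod.symm
    _ ≤ ∏ _p ∈ S, (2 * n) :=
        Finset.prod_le_prod' fun p _ => Nat.pow_factorization_choose_le h2n
    _ = (2 * n) ^ S.card := by rw [Finset.prod_const]
    _ = (2 * n) ^ Nat.count Nat.Prime (2 * n + 1) := by rw [hcard]

private lemma count_ge (k : ℕ) (hk : 2 ≤ k) : k ≤ Nat.count Nat.Prime (k * k) := by
  rcases Nat.lt_or_ge k 8 with h | h
  · interval_cases k <;> decide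
  · set n := k * k / 2 with hn
    have hkk : 64 ≤ k * k := Nat.mul_le_mul h h
    have hn1 : k * k - 1 ≤ 2 * n := by omega
    have hn2 : 2 * n ≤ k * k := by omega
    have hnpos : 0 < n := by omega
    by_contra hc
    push_neg at hc
    have hnotprime : ¬ Nat.Prime (k * k) := fun hp => by
      rcases Nat.prime_mul_iff.mp hp with ⟨_, h1⟩ | ⟨_, h1⟩ <;> omega
    set c := Nat.count Nat.Prime (2 * n + 1) with hcdef
    have hc' : c + 1 ≤ k := by
      have hmono : Nat.count Nat.Prime (2 * n + 1) ≤ Nat.count Nat.Prime (k * k + 1) :=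
        Nat.count_monotone _ (by omega)
      have heq : Nat.count Nat.Prime (k * k + 1) = Nat.count Nat.Prime (k * k) := by
        rw [Nat.count_succ, if_neg hnotprime, Nat.add_zero]
      omega
    have h1 : 2 ^ (k * k - 1) ≤ 4 ^ n := by
      rw [show (4 : ℕ) = 2 ^ 2 by norm_num, ← pow_mul]
      exact Nat.pow_le_pow_right (by norm_num) (by omega)
    have h2 : 4 ^ n ≤ 2 * n * Nat.centralBinom n :=
      Nat.four_pow_le_two_mul_self_mul_centralBinom n hnpos
    have h4 : 2 * n * Nat.centralBinom n ≤ (2 * n) ^ (c + 1) := by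
      rw [pow_succ]
      calc 2 * n * Nat.centralBinom n ≤ 2 * n * (2 * n) ^ c :=
            Nat.mul_le_mul_left _ (binom_le n hnpos)
        _ = (2 * n) ^ c * (2 * n) := by ring
    have h5 : (2 * n) ^ (c + 1) ≤ (k * k) ^ k := by
      calc (2 * n) ^ (c + 1) ≤ (k * k) ^ (c + 1) := Nat.pow_le_pow_left hn2 _
        _ ≤ (k * k) ^ k := Nat.pow_le_pow_right (by omega) hc'
    have h6 : (k * k) ^ k ≤ 2 ^ (k * k - 2) := by
      calc (k * k) ^ k = k ^ (2 * k) := by rw [two_mul, pow_add]; ring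
        _ ≤ k ^ (2 * k + 1) := Nat.pow_le_pow_right (by omega) (by omega)
        _ ≤ 2 ^ (k * k - 2) := lemT k h
    have hfin : 2 ^ (k * k - 1) ≤ 2 ^ (k * k - 2) := le_trans h1 (le_trans h2 (le_trans h4 (le_trans h5 h6)))
    have : (2 : ℕ) ^ (k * k - 2) < 2 ^ (k * k - 1) :=
      Nat.pow_lt_pow_right (by norm_num) (by omega)
    omega

/-- `p k` denotes the `k`-th prime number, so `p 1 = 2`. -/
noncomputable def p (k : ℕ) : ℕ := Nat.nth Nat.Prime (k - 1)

theorem prime_lt_sq :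
    (∀ k : ℕ, 1 ≤ k → p k < k ^ 2 + 2) ∧
    (∀ k : ℕ, 2 ≤ k → p k < k ^ 2) ∧
    (∀ n : ℕ, 1 ≤ n → p (n + 1) < (n + 1) ^ 2) := by
  have key : ∀ k : ℕ, 2 ≤ k → p k < k ^ 2 := by
    intro k hk
    have h := count_ge k hk
    have hlt : k - 1 < Nat.count Nat.Prime (k * k) := by omega
    have := (Nat.lt_nth_iff_count_lt Nat.infinite_setOf_prime).mp hlt
    simpa [p, pow_two] using this
  refine ⟨?_, key, fun n _ => key (n + 1) (by omega)⟩
  intro k hk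
  rcases Nat.lt_or_ge k 2 with h | h
  · have hk1 : k = 1 := by omega
    subst hk1
    simp [p, Nat.nth_prime_zero_eq_two]
  · exact lt_of_lt_of_le (key k h) (by omega)
end

section
/- For every n ≥ 1, the average value (√p_{n+1} - √2)/n of the Andrica differences lies strictly in the open interval (0, 1). -/
open Finset Real

/-- Every prime power factor of the central binomial coefficient is at most `2*m`,
and there are at most `π(2m)` of them, giving a Chebyshev-type bound. -/
lemma aux_centralBinom_le_pow (m : ℕ) (hm : 0 < m) :
    Nat.centralBinom m ≤ (2*m) ^ (Nat.count Nat.Prime (2*m+1)) := by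
  have h2m : 0 < 2*m := by omega
  have hsub : (Nat.centralBinom m).factorization.support ⊆
      (Finset.range (2*m+1)).filter Nat.Prime := by
    intro q hq
    have hqp : q.Prime := Nat.prime_of_mem_primeFactors hq
    have hq1 : (Nat.centralBinom m).factorization q ≠ 0 := Finsupp.mem_support_iff.mp hq
    have hle : q ^ (Nat.centralBinom m).factorization q ≤ 2*m := by
      rw [Nat.centralBinom_eq_two_mul_choose]
      exact Nat.pow_factorization_choose_le h2m
    have : q ≤ 2*m := le_trans (Nat.le_self_pow hq1 q) hle
    simp [Finset.mem_filter, Finset.mem_range, hqp]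
    omega
  calc Nat.centralBinom m
      = ∏ q ∈ (Nat.centralBinom m).factorization.support,
          q ^ (Nat.centralBinom m).factorization q := by
        conv_lhs => rw [← Nat.factorization_prod_pow_eq_self (Nat.centralBinom_ne_zero m)]
        rfl
    _ ≤ ∏ q ∈ (Nat.centralBinom m).factorization.support, 2*m := by
        apply Finset.prod_le_prod'
        intro q hq
        rw [Nat.centralBinom_eq_two_mul_choose]
        exact Nat.pow_factorization_choose_le h2m
    _ = (2*m) ^ (Nat.centralBinom m).factorization.support.card := Finset.prod_const _
    _ ≤ (2*m) ^ (Nat.count Nat.Prime (2*m+1)) := by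
        apply Nat.pow_le_pow_right h2m
        rw [Nat.count_eq_card_filter_range]
        exact Finset.card_le_card hsub

lemma aux_sq_add_one_le (n : ℕ) (hn : 7 ≤ n) : n^2 + 1 ≤ 2^(n-1) := by
  induction n with
  | zero => omega
  | succ k ih =>
    rcases Nat.lt_or_ge k 7 with h | h
    · interval_cases k <;> simp_all
    · have hk := ih (by omega)
      have h1 : (k+1)^2 + 1 ≤ 2 * (k^2 + 1) := by nlinarith
      have h3 : 2 * 2^(k-1) = 2^(k+1-1) := by
        rw [← pow_succ']; congr 1; omega
      omega

lemma aux_key_pow (n : ℕ) (hn : 7 ≤ n) : (n^2+1)^(n+1) ≤ 2^(n^2) := by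
  induction n with
  | zero => omega
  | succ k ih =>
    rcases Nat.lt_or_ge k 7 with h | h
    · have : k = 6 := by omega
      subst this
      norm_num
    · have hk := ih h
      have h1 : (k+1)^2 + 1 ≤ 2 * (k^2+1) := by nlinarith
      have h2 : k^2 + 1 ≤ 2^(k-1) := aux_sq_add_one_le k h
      calc ((k+1)^2+1)^(k+2) ≤ (2*(k^2+1))^(k+2) := Nat.pow_le_pow_left h1 _
        _ = 2^(k+2) * ((k^2+1)^(k+1) * (k^2+1)) := by rw [mul_pow]; ring
        _ ≤ 2^(k+2) * (2^(k^2) * 2^(k-1)) :=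
            Nat.mul_le_mul_left _ (Nat.mul_le_mul hk h2)
        _ = 2^(k+2+(k^2+(k-1))) := by rw [← pow_add, ← pow_add]
        _ = 2^((k+1)^2) := by
            congr 1
            have : (k+1)^2 = k^2+2*k+1 := by ring
            omega

lemma aux_count_big (n : ℕ) (hn : 7 ≤ n) : n < Nat.count Nat.Prime (n^2+2) := by
  by_contra hc
  push_neg at hc
  set m := (n^2+1)/2 with hm
  have hK1 : n^2 ≤ 2*m := by omega
  have hK2 : 2*m ≤ n^2+1 := by omega
  have hm4 : 4 ≤ m := by nlinarith
  have hcount : Nat.count Nat.Prime (2*m+1) ≤ n :=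
    le_trans (Nat.count_monotone _ (by omega : 2*m+1 ≤ n^2+2)) hc
  have h1 : 4^m < m * Nat.centralBinom m :=
    Nat.four_pow_lt_mul_centralBinom m hm4
  have h2 : m * Nat.centralBinom m ≤ (2*m) * (2*m)^n := by
    apply Nat.mul_le_mul (by omega)
    calc Nat.centralBinom m ≤ (2*m) ^ (Nat.count Nat.Prime (2*m+1)) :=
          aux_centralBinom_le_pow m (by omega)
      _ ≤ (2*m)^n := Nat.pow_le_pow_right (by omega) hcount
  have h3 : (2*m) * (2*m)^n ≤ (n^2+1)^(n+1) := by
    calc (2*m) * (2*m)^n = (2*m)^(n+1) := (pow_succ' _ _).symm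
      _ ≤ (n^2+1)^(n+1) := Nat.pow_le_pow_left hK2 _
  have h4 : (n^2+1)^(n+1) ≤ 2^(n^2) := aux_key_pow n hn
  have h5 : (2 : ℕ)^(n^2) ≤ 4^m := by
    calc (2:ℕ)^(n^2) ≤ 2^(2*m) := Nat.pow_le_pow_right (by omega) hK1
      _ = 4^m := by rw [pow_mul]; norm_num
  omega

lemma aux_nth_prime_le (n : ℕ) (hn : 1 ≤ n) : Nat.nth Nat.Prime n ≤ n^2 + 2*n := by
  rcases Nat.lt_or_ge n 7 with h | h
  · have key : n < Nat.count Nat.Prime (n^2+2*n+1) := by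
      interval_cases n <;> decide
    have := Nat.nth_lt_of_lt_count key
    omega
  · have key := aux_count_big n h
    have := Nat.nth_lt_of_lt_count key
    nlinarith

theorem andrica_average_mem_Ioo (n : ℕ) (hn : 1 ≤ n) :
    (Real.sqrt (p (n + 1)) - Real.sqrt 2) / n ∈ Set.Ioo (0 : ℝ) 1 := by
  have hp : p (n+1) = Nat.nth Nat.Prime n := by simp [p]
  have hnpos : (0:ℝ) < n := by exact_mod_cast hn
  have hge : 3 ≤ Nat.nth Nat.Prime n := by
    have := Nat.add_two_le_nth_prime n
    omega
  have hgeR : (2:ℝ) < (Nat.nth Nat.Prime n : ℝ) := by exact_mod_cast by omega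
  have hs2 : Real.sqrt 2 < Real.sqrt (Nat.nth Nat.Prime n) :=
    Real.sqrt_lt_sqrt (by norm_num) hgeR
  have hleR : (Nat.nth Nat.Prime n : ℝ) ≤ (n:ℝ)^2 + 2*n := by
    exact_mod_cast aux_nth_prime_le n hn
  have hub : Real.sqrt (Nat.nth Nat.Prime n) < n + Real.sqrt 2 := by
    rw [Real.sqrt_lt' (by positivity)]
    have h2 : Real.sqrt 2 ^ 2 = 2 := Real.sq_sqrt (by norm_num)
    have hs2g : (1:ℝ) < Real.sqrt 2 := by
      rw [show (1:ℝ) = Real.sqrt 1 by simp]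
      exact Real.sqrt_lt_sqrt (by norm_num) (by norm_num)
    nlinarith [hleR, hnpos]
  constructor
  · apply div_pos _ hnpos
    rw [hp]
    linarith
  · rw [div_lt_one hnpos, hp]
    linarith
end
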